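/- Let p be a prime, n ≥ 1, and G ≤ GL₂(ℤ/pⁿℤ). Suppose G contains a diagonal matrix ρₙ = diag(λ₁, λ₂) with λ₁ ≢ 1 mod p and λ₂ ≢ 1 mod p. If Z : G → (ℤ/pⁿℤ)² is a cocycle (Z_{στ} = Z_σ + σ·Z_τ) whose restrictions to two subgroups L, U ≤ G with ρₙ ∈ L ∩ U are both coboundaries, and L and U together generate G, then Z is a coboundary on G. -/

import Mathlib

theorem unit_lem (p : ℕ) (hp : p.Prime) (n : ℕ) (hn : n ≠ 0) (x : ZMod (p^n))
    (hx : ZMod.castHom (dvd_pow_self p hn) (ZMod p) x ≠ 0) : IsUnit x := by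
  have : NeZero (p ^ n) := ⟨pow_ne_zero _ hp.pos.ne'⟩
  have hv : ¬ p ∣ x.val := by
    intro hd
    apply hx
    rw [ZMod.castHom_apply, ← ZMod.natCast_val, ZMod.natCast_eq_zero_iff]
    exact hd
  rw [← ZMod.natCast_zmod_val x, ZMod.isUnit_iff_coprime]
  exact Nat.Coprime.pow_right _ ((Nat.Prime.coprime_iff_not_dvd hp).mpr hv).symm

/-- Gluing coboundaries: if a cocycle on `G ≤ GL₂(ℤ/pⁿℤ)` is a coboundary on two
subgroups `L, U` that both contain a diagonal `ρₙ = diag(λ₁, λ₂)` with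
`λ₁, λ₂ ≢ 1 mod p` and that together generate `G`, then it is a coboundary on `G`. -/
theorem stmt_8 (p : ℕ) (hp : p.Prime) (n : ℕ) (hn : 1 ≤ n)
    (G L U : Subgroup (GL (Fin 2) (ZMod (p ^ n)))) (hLG : L ≤ G) (hUG : U ≤ G)
    (hgen : G = L ⊔ U)
    (lam1 lam2 : ZMod (p ^ n))
    (h1 : ZMod.castHom (dvd_pow_self p (by omega : n ≠ 0)) (ZMod p) lam1 ≠ 1)
    (h2 : ZMod.castHom (dvd_pow_self p (by omega : n ≠ 0)) (ZMod p) lam2 ≠ 1)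
    (rho : GL (Fin 2) (ZMod (p ^ n))) (hrhoL : rho ∈ L) (hrhoU : rho ∈ U)
    (hrho : (rho : Matrix (Fin 2) (Fin 2) (ZMod (p ^ n))) = !![lam1, 0; 0, lam2])
    (Z : GL (Fin 2) (ZMod (p ^ n)) → (Fin 2 → ZMod (p ^ n)))
    (hZ : ∀ σ ∈ G, ∀ τ ∈ G, Z (σ * τ) = Z σ +
      (σ : Matrix (Fin 2) (Fin 2) (ZMod (p ^ n))).mulVec (Z τ))
    (hL : ∃ P : Fin 2 → ZMod (p ^ n), ∀ σ ∈ L,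
      Z σ = (σ : Matrix (Fin 2) (Fin 2) (ZMod (p ^ n))).mulVec P - P)
    (hU : ∃ Q : Fin 2 → ZMod (p ^ n), ∀ σ ∈ U,
      Z σ = (σ : Matrix (Fin 2) (Fin 2) (ZMod (p ^ n))).mulVec Q - Q) :
    ∃ P : Fin 2 → ZMod (p ^ n), ∀ σ ∈ G,
      Z σ = (σ : Matrix (Fin 2) (Fin 2) (ZMod (p ^ n))).mulVec P - P := by
  obtain ⟨P, hP⟩ := hL
  obtain ⟨Q, hQ⟩ := hU
  have hn' : n ≠ 0 := by omega
  -- λᵢ - 1 are units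
  have hu1 : IsUnit (lam1 - 1) := by
    apply unit_lem p hp n hn'
    rw [map_sub, map_one, sub_ne_zero]
    exact h1
  have hu2 : IsUnit (lam2 - 1) := by
    apply unit_lem p hp n hn'
    rw [map_sub, map_one, sub_ne_zero]
    exact h2
  -- P = Q
  have hPQ : P = Q := by
    have h := (hP rho hrhoL).symm.trans (hQ rho hrhoU)
    rw [hrho] at h
    have h0 := congrFun h 0
    have h1' := congrFun h 1
    simp [Matrix.mulVec, dotProduct, Fin.sum_univ_two, Matrix.vecHead, Matrix.vecTail] at h0 h1'
    have e0 : P 0 = Q 0 := hu1.mul_left_cancel (by linear_combination h0)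
    have e1 : P 1 = Q 1 := hu2.mul_left_cancel (by linear_combination h1')
    funext i
    fin_cases i
    · exact e0
    · exact e1
  subst hPQ
  refine ⟨P, fun σ hσ => ?_⟩
  have hσ' : σ ∈ L ⊔ U := hgen ▸ hσ
  rw [Subgroup.sup_eq_closure] at hσ'
  have hZ1 : Z 1 = 0 := by
    have := hZ 1 G.one_mem 1 G.one_mem
    simpa using this
  induction hσ' using Subgroup.closure_induction with
  | mem x hx =>
    rcases hx with hx | hx
    · exact hP x hx
    · exact hQ x hx
  | one => simp [hZ1]
  | mul x y hx hy ihx ihy =>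
    have hxG : x ∈ G := hgen ▸ Subgroup.sup_eq_closure L U ▸ hx
    have hyG : y ∈ G := hgen ▸ Subgroup.sup_eq_closure L U ▸ hy
    rw [hZ x hxG y hyG, ihx hxG, ihy hyG]
    rw [Units.val_mul, ← Matrix.mulVec_mulVec, Matrix.mulVec_sub]
    abel
  | inv x hx ihx =>
    have hxG : x ∈ G := hgen ▸ Subgroup.sup_eq_closure L U ▸ hx
    have key := hZ x⁻¹ (G.inv_mem hxG) x hxG
    have hinv : (x⁻¹ : GL (Fin 2) (ZMod (p ^ n))).val
        * (x : GL (Fin 2) (ZMod (p ^ n))).val = 1 := by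
      rw [← Units.val_mul, inv_mul_cancel, Units.val_one]
    rw [inv_mul_cancel, hZ1, ihx hxG, Matrix.mulVec_sub, Matrix.mulVec_mulVec, hinv,
      Matrix.one_mulVec] at key
    linear_combination -key
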